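/- Let γ, γ̃ ∈ ℝ. Suppose the γ-shifted system has a dichotomy on a splitting (L1,L2) and the γ̃-shifted system has a dichotomy on a splitting (L̃1,L̃2). If dim L1 = dim L̃1, then L1 = L̃1. -/

import Mathlib

open Set Filter Topology

noncomputable section

abbrev Euc (d : ℕ) := EuclideanSpace ℝ (Fin d)

/-- The solution `x(n, x₀)` of `x(n+1) = A(n) x(n)`, `x(0,x₀) = x₀`. -/
def sol {d : ℕ} (A : ℕ → (Euc d ≃L[ℝ] Euc d)) : ℕ → Euc d → Euc d
  | 0, x => x
  | n + 1, x => A n (sol A n x)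

/-- Boundedness of the coefficients `A(n)` and their inverses. -/
def BddSys {d : ℕ} (A : ℕ → (Euc d ≃L[ℝ] Euc d)) : Prop :=
  (∃ c : ℝ, ∀ n : ℕ, ‖(A n : Euc d →L[ℝ] Euc d)‖ ≤ c) ∧
  (∃ c : ℝ, ∀ n : ℕ, ‖((A n).symm : Euc d →L[ℝ] Euc d)‖ ≤ c)

/-- `D1(γ,U)` holds uniformly (constant `C`). -/
def D1u {d : ℕ} (A : ℕ → (Euc d ≃L[ℝ] Euc d)) (γ : ℝ) (U : Submodule ℝ (Euc d)) : Prop :=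
  ∃ C : ℝ, 0 < C ∧
    ∀ m n : ℕ, m ≤ n → ∀ x₀ ∈ U,
      ‖sol A n x₀‖ ≤ C * Real.exp (γ * ((n : ℝ) - (m : ℝ))) * ‖sol A m x₀‖

/-- `D2(γ,U)` holds uniformly (constant `C`). -/
def D2u {d : ℕ} (A : ℕ → (Euc d ≃L[ℝ] Euc d)) (γ : ℝ) (U : Submodule ℝ (Euc d)) : Prop :=
  ∃ C : ℝ, 0 < C ∧
    ∀ m n : ℕ, m ≤ n → ∀ x₀ ∈ U,
      C * Real.exp (γ * ((n : ℝ) - (m : ℝ))) * ‖sol A m x₀‖ ≤ ‖sol A n x₀‖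

/-- `𝒰` is a set of subspaces of `L` whose union is `L`. -/
def IsCover {d : ℕ} (𝒰 : Set (Submodule ℝ (Euc d))) (L : Submodule ℝ (Euc d)) : Prop :=
  (∀ U ∈ 𝒰, U ≤ L) ∧ (⋃ U ∈ 𝒰, (U : Set (Euc d))) = (L : Set (Euc d))

/-- The `γ`-shifted system `x(n+1) = e^{-γ} A(n) x(n)` has a dichotomy on the
splitting `(L1,L2)`. -/
def ShiftedDichotomy {d : ℕ} (A : ℕ → (Euc d ≃L[ℝ] Euc d)) (γ : ℝ)
    (L1 L2 : Submodule ℝ (Euc d)) : Prop :=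
  IsCompl L1 L2 ∧
  ∃ 𝒰1 𝒰2 : Set (Submodule ℝ (Euc d)), IsCover 𝒰1 L1 ∧ IsCover 𝒰2 L2 ∧
    ∃ α : ℝ, 0 < α ∧ (∀ U ∈ 𝒰1, D1u A (γ - α) U) ∧ (∀ U ∈ 𝒰2, D2u A (γ + α) U)

lemma sol_add {d : ℕ} (A : ℕ → (Euc d ≃L[ℝ] Euc d)) (n : ℕ) (x y : Euc d) :
    sol A n (x + y) = sol A n x + sol A n y := by
  induction n with
  | zero => rfl
  | succ n ih => simp [sol, ih, map_add]

lemma exp_mul_nat_tendsto {c : ℝ} (hc : c < 0) :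
    Tendsto (fun n : ℕ => Real.exp (c * n)) atTop (𝓝 0) := by
  have h1 : ∀ n : ℕ, Real.exp (c * n) = (Real.exp c) ^ n := by
    intro n; rw [← Real.exp_nat_mul, mul_comm]
  simp only [h1]
  exact tendsto_pow_atTop_nhds_zero_of_lt_one (Real.exp_pos c).le
    (Real.exp_lt_one_iff.mpr hc)

lemma dicho_le {d : ℕ} (A : ℕ → (Euc d ≃L[ℝ] Euc d))
    (γ γ' : ℝ) (L1 L2 L1' L2' : Submodule ℝ (Euc d))
    (h : ShiftedDichotomy A γ L1 L2) (h' : ShiftedDichotomy A γ' L1' L2')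
    (hγ : γ ≤ γ') : L1 ≤ L1' := by
  obtain ⟨hc, 𝒰1, 𝒰2, hcov1, hcov2, α, hα, hD1, hD2⟩ := h
  obtain ⟨hc', 𝒰1', 𝒰2', hcov1', hcov2', α', hα', hD1', hD2'⟩ := h'
  intro x hx
  -- find cover element containing x
  have hxU : x ∈ ⋃ U ∈ 𝒰1, (U : Set (Euc d)) := by rw [hcov1.2]; exact hx
  simp only [Set.mem_iUnion, SetLike.mem_coe] at hxU
  obtain ⟨U, hU, hxU⟩ := hxU
  obtain ⟨C₁, hC₁, hb1⟩ := hD1 U hU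
  -- decompose x
  have hxtop : x ∈ L1' ⊔ L2' := by rw [hc'.sup_eq_top]; trivial
  obtain ⟨y, hy, z, hz, hyz⟩ := Submodule.mem_sup.mp hxtop
  have hyU : y ∈ ⋃ U ∈ 𝒰1', (U : Set (Euc d)) := by rw [hcov1'.2]; exact hy
  simp only [Set.mem_iUnion, SetLike.mem_coe] at hyU
  obtain ⟨U', hU', hyU⟩ := hyU
  obtain ⟨C₂, hC₂, hb2⟩ := hD1' U' hU'
  have hzV : z ∈ ⋃ U ∈ 𝒰2', (U : Set (Euc d)) := by rw [hcov2'.2]; exact hz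
  simp only [Set.mem_iUnion, SetLike.mem_coe] at hzV
  obtain ⟨V, hV, hzV⟩ := hzV
  obtain ⟨C₃, hC₃, hb3⟩ := hD2' V hV
  suffices hz0 : z = 0 by
    have : x = y := by rw [← hyz, hz0, add_zero]
    rwa [this]
  by_contra hz0
  have hznorm : 0 < ‖z‖ := norm_pos_iff.mpr hz0
  -- the key pointwise inequality
  have key : ∀ n : ℕ,
      C₃ * Real.exp ((γ' + α') * n) * ‖z‖ ≤
        C₁ * Real.exp ((γ - α) * n) * ‖x‖ + C₂ * Real.exp ((γ' - α') * n) * ‖y‖ := by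
    intro n
    have e0 : ∀ w : Euc d, sol A 0 w = w := fun w => rfl
    have h3 := hb3 0 n (Nat.zero_le n) z hzV
    have h1 := hb1 0 n (Nat.zero_le n) x hxU
    have h2 := hb2 0 n (Nat.zero_le n) y hyU
    simp only [e0, Nat.cast_zero, sub_zero] at h3 h1 h2
    have hsplit : sol A n x = sol A n y + sol A n z := by
      rw [← hyz, sol_add]
    have htri : ‖sol A n z‖ ≤ ‖sol A n x‖ + ‖sol A n y‖ := by
      have : sol A n z = sol A n x - sol A n y := by rw [hsplit]; abel
      rw [this]
      exact norm_sub_le _ _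
    linarith
  -- derive C₃ * ‖z‖ ≤ g n with g → 0
  set c : ℝ := γ' + α' with hcdef
  have hbound : ∀ n : ℕ, C₃ * ‖z‖ ≤
      C₁ * ‖x‖ * Real.exp ((γ - α - c) * n) + C₂ * ‖y‖ * Real.exp ((γ' - α' - c) * n) := by
    intro n
    have hepos : (0 : ℝ) < Real.exp (c * n) := Real.exp_pos _
    rw [← mul_le_mul_iff_of_pos_right hepos]
    have e1 : (γ - α - c) * (n : ℝ) + c * n = (γ - α) * n := by ring
    have e2 : (γ' - α' - c) * (n : ℝ) + c * n = (γ' - α') * n := by ring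
    calc C₃ * ‖z‖ * Real.exp (c * n) = C₃ * Real.exp (c * n) * ‖z‖ := by ring
      _ ≤ C₁ * Real.exp ((γ - α) * n) * ‖x‖ + C₂ * Real.exp ((γ' - α') * n) * ‖y‖ := key n
      _ = (C₁ * ‖x‖ * Real.exp ((γ - α - c) * n)
            + C₂ * ‖y‖ * Real.exp ((γ' - α' - c) * n)) * Real.exp (c * n) := by
          simp only [add_mul, mul_assoc, ← Real.exp_add, e1, e2]
          ring
  have ht : Tendsto (fun n : ℕ => C₁ * ‖x‖ * Real.exp ((γ - α - c) * n)
      + C₂ * ‖y‖ * Real.exp ((γ' - α' - c) * n)) atTop (𝓝 0) := by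
    have h1 : γ - α - c < 0 := by rw [hcdef]; linarith
    have h2 : γ' - α' - c < 0 := by rw [hcdef]; linarith
    have := ((exp_mul_nat_tendsto h1).const_mul (C₁ * ‖x‖)).add
      ((exp_mul_nat_tendsto h2).const_mul (C₂ * ‖y‖))
    simpa using this
  have hle : C₃ * ‖z‖ ≤ 0 := ge_of_tendsto' ht hbound
  nlinarith

/-- **Uniqueness of dichotomy subspaces.** -/
theorem dichotomy_subspace_unique {d : ℕ} (hd : 1 ≤ d)
    (A : ℕ → (Euc d ≃L[ℝ] Euc d)) (hA : BddSys A)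
    (γ γ' : ℝ) (L1 L2 L1' L2' : Submodule ℝ (Euc d))
    (h : ShiftedDichotomy A γ L1 L2) (h' : ShiftedDichotomy A γ' L1' L2')
    (hrank : Module.finrank ℝ L1 = Module.finrank ℝ L1') :
    L1 = L1' := by
  have _ : FiniteDimensional ℝ (Euc d) := by infer_instance
  rcases le_total γ γ' with hγ | hγ
  · exact Submodule.eq_of_le_of_finrank_eq (dicho_le A γ γ' L1 L2 L1' L2' h h' hγ) hrank
  · exact (Submodule.eq_of_le_of_finrank_eq (dicho_le A γ' γ L1' L2' L1 L2 h' h hγ) hrank.symm).symm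

end
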